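/- Let n ≥ 1 and let φ : FreeGroup (Fin n) →* FreeGroup (Fin n) be a group homomorphism that is not injective. Let D be a family of Fox derivatives on FreeGroup (Fin n). Then there exists U : Fin n → MonoidAlgebra ℤ (FreeGroup (Fin n)) with U ≠ 0 such that for every j : Fin n, Σ_i (U i) * (D j (φ (FreeGroup.of i))) = 0 in MonoidAlgebra ℤ (FreeGroup (Fin n)). Consequently, for every division ring K and every injective ring homomorphism ι : MonoidAlgebra ℤ (FreeGroup (Fin n)) → K, the n × n matrix over K whose (i,j) entry is ι(D j (φ (FreeGroup.of i))) is not invertible. -/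

import Mathlib

/-- A family of Fox derivatives on the free group `FreeGroup (Fin m)`:
`D j (of i) = δᵢⱼ` and the Fox product rule. -/
def IsFoxDerivative {m : ℕ}
    (D : Fin m → FreeGroup (Fin m) → MonoidAlgebra ℤ (FreeGroup (Fin m))) : Prop :=
  (∀ i j : Fin m, D j (FreeGroup.of i) = if i = j then 1 else 0) ∧
  (∀ (j : Fin m) (u v : FreeGroup (Fin m)),
    D j (u * v) = D j u + (MonoidAlgebra.of ℤ (FreeGroup (Fin m)) u) * D j v)

open FreeGroup MonoidAlgebra

variable {n : ℕ}

/-- reduced iff chain' of "no adjacent inverse pair" -/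
theorem reduce_eq_self_iff (L : List (Fin n × Bool)) :
    FreeGroup.reduce L = L ↔ List.Chain' (fun a b => b ≠ (a.1, !a.2)) L := by
  constructor
  · induction L with
    | nil => intro _; exact List.isChain_nil
    | cons x L ih =>
      intro h
      rw [FreeGroup.reduce.cons] at h
      rcases hr : FreeGroup.reduce L with _ | ⟨hd, tl⟩
      · rw [hr] at h; simp at h
        rw [h]; exact List.isChain_singleton x
      · rw [hr] at h
        change (if x.1 = hd.1 ∧ x.2 = !hd.2 then tl else x :: hd :: tl) = x :: L at h
        by_cases hc : x.1 = hd.1 ∧ x.2 = !hd.2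
        · rw [if_pos hc] at h
          have := congrArg List.length h
          have hle : (FreeGroup.reduce L).length ≤ L.length :=
            FreeGroup.Red.length_le FreeGroup.reduce.red
          rw [hr] at hle
          simp at this hle; omega
        · rw [if_neg hc] at h
          have hL : L = hd :: tl := by
            have := h; simp at this; exact this.symm
          have hred : FreeGroup.reduce L = L := by rw [hr, hL]
          have := ih hred
          rw [hL]
          refine List.IsChain.cons_cons ?_ (hL ▸ this)
          intro he
          apply hc
          rw [he]; exact ⟨rfl, by simp⟩

  · induction L with
    | nil => intro _; rfl
    | cons x L ih =>
      intro h
      have htl : FreeGroup.reduce L = L := ih h.tail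
      rw [FreeGroup.reduce.cons, htl]
      cases L with
      | nil => rfl
      | cons hd tl =>
        have hx : hd ≠ (x.1, !x.2) := List.isChain_cons_cons.mp h |>.1
        have hc : ¬(x.1 = hd.1 ∧ x.2 = !hd.2) := by
          intro ⟨h1, h2⟩
          apply hx
          exact Prod.ext h1.symm (by simp [h2])
        simp [hc]
section
variable {n : ℕ} (φ : FreeGroup (Fin n) →* FreeGroup (Fin n))
  (D : Fin n → FreeGroup (Fin n) → MonoidAlgebra ℤ (FreeGroup (Fin n)))


variable (hD : IsFoxDerivative D)
include hD

theorem foxD_one (j : Fin n) : D j 1 = 0 := by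
  have := hD.2 j 1 1
  rw [one_mul, _root_.map_one, one_mul] at this
  exact left_eq_add.mp this

theorem foxD_inv (j : Fin n) (g : FreeGroup (Fin n)) :
    D j g⁻¹ = -((MonoidAlgebra.of ℤ (FreeGroup (Fin n)) g⁻¹) * D j g) := by
  have h := hD.2 j g⁻¹ g
  rw [inv_mul_cancel, foxD_one D hD] at h
  exact eq_neg_of_add_eq_zero_left h.symm

end
section
variable {n : ℕ} (φ : FreeGroup (Fin n) →* FreeGroup (Fin n))
  (D : Fin n → FreeGroup (Fin n) → MonoidAlgebra ℤ (FreeGroup (Fin n)))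

local notation "R'" => MonoidAlgebra ℤ (FreeGroup (Fin n))

noncomputable def φs : R' →+* R' := MonoidAlgebra.mapDomainRingHom ℤ φ

theorem φs_single (u : FreeGroup (Fin n)) (r : ℤ) :
    φs φ (MonoidAlgebra.single u r) = MonoidAlgebra.single (φ u) r := by
  simp [φs, MonoidAlgebra.mapDomainRingHom_apply, Finsupp.mapDomain_single]

theorem φs_of (u : FreeGroup (Fin n)) :
    φs φ (MonoidAlgebra.of ℤ (FreeGroup (Fin n)) u)
      = MonoidAlgebra.of ℤ (FreeGroup (Fin n)) (φ u) := by
  rw [MonoidAlgebra.of_apply, MonoidAlgebra.of_apply]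
  exact φs_single φ u 1

theorem φs_of_mul (u : FreeGroup (Fin n)) (z : R') :
    φs φ ((MonoidAlgebra.of ℤ (FreeGroup (Fin n)) u) * z)
      = (MonoidAlgebra.of ℤ (FreeGroup (Fin n)) (φ u)) * φs φ z := by
  rw [_root_.map_mul]
  congr 1
  exact φs_single φ u 1

variable (hD : IsFoxDerivative D)
include hD

theorem fox_chain_rule (g : FreeGroup (Fin n)) (j : Fin n) :
    D j (φ g) = ∑ i : Fin n, φs φ (D i g) * D j (φ (FreeGroup.of i)) := by
  induction g using FreeGroup.induction_on with
  | C1 =>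
    rw [_root_.map_one]
    have h0 : ∀ i : Fin n, φs φ (D i (1 : FreeGroup (Fin n))) * D j (φ (FreeGroup.of i)) = 0 :=
      fun i => by rw [foxD_one D hD]; simp
    rw [Finset.sum_congr rfl fun i _ => h0 i, foxD_one D hD]
    simp
  | of x =>
    show D j (φ (FreeGroup.of x)) = ∑ i : Fin n,
      φs φ (D i (FreeGroup.of x)) * D j (φ (FreeGroup.of i))
    simp only [hD.1]
    have : ∀ i : Fin n,
        φs φ ((if x = i then (1:R') else 0)) * D j (φ (FreeGroup.of i))
        = if x = i then D j (φ (FreeGroup.of x)) else 0 := by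
      intro i
      split_ifs with h
      · subst h; simp
      · simp
    rw [Finset.sum_congr rfl fun i _ => this i, Finset.sum_ite_eq Finset.univ x
      (fun _ => D j (φ (FreeGroup.of x)))]
    simp
  | inv_of x _ =>
    show D j (φ ((FreeGroup.of x)⁻¹)) = ∑ i : Fin n,
      φs φ (D i ((FreeGroup.of x)⁻¹)) * D j (φ (FreeGroup.of i))
    rw [_root_.map_inv, foxD_inv D hD]
    simp only [foxD_inv D hD, hD.1]
    have : ∀ i : Fin n,
        φs φ (-((MonoidAlgebra.of ℤ (FreeGroup (Fin n)) (FreeGroup.of x)⁻¹) *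
            (if x = i then (1:R') else 0))) * D j (φ (FreeGroup.of i))
        = if x = i then -((MonoidAlgebra.of ℤ (FreeGroup (Fin n)) (φ (FreeGroup.of x))⁻¹) *
            D j (φ (FreeGroup.of x))) else 0 := by
      intro i
      split_ifs with h
      · subst h
        rw [mul_one, map_neg, φs_of φ, _root_.map_inv, neg_mul]
      · simp
    rw [Finset.sum_congr rfl fun i _ => this i, Finset.sum_ite_eq Finset.univ x _]
    simp
  | mul u v hu hv =>
    rw [_root_.map_mul, hD.2, hu, hv, Finset.mul_sum, ← Finset.sum_add_distrib]
    refine Finset.sum_congr rfl fun i _ => ?_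
    rw [hD.2, map_add, add_mul, φs_of_mul, mul_assoc]

end
section
variable {n : ℕ} (φ : FreeGroup (Fin n) →* FreeGroup (Fin n))
  (D : Fin n → FreeGroup (Fin n) → MonoidAlgebra ℤ (FreeGroup (Fin n)))

/-- coefficient at 1 of the φ-pushforward of the Fox derivative -/
noncomputable def cf (x : Fin n) (g : FreeGroup (Fin n)) : ℤ :=
  (φs φ (D x g)).coeff 1

theorem mk_single_false (y : Fin n) :
    FreeGroup.mk [(y, false)] = (FreeGroup.of y)⁻¹ := by
  rw [FreeGroup.of, FreeGroup.inv_mk]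
  rfl

variable (hD : IsFoxDerivative D)
include hD

theorem cf_one (x : Fin n) : cf φ D x 1 = 0 := by
  rw [cf, foxD_one D hD]
  simp

theorem cf_mul_of (x y : Fin n) (g : FreeGroup (Fin n)) :
    cf φ D x (g * FreeGroup.of y)
      = cf φ D x g + (if y = x ∧ φ g = 1 then 1 else 0) := by
  rw [cf, cf, hD.2, map_add, MonoidAlgebra.coeff_add, Finsupp.add_apply]
  congr 1
  rw [hD.1]
  by_cases h : y = x
  · rw [if_pos h, mul_one, φs_of φ, MonoidAlgebra.of_apply, MonoidAlgebra.coeff_single, Finsupp.single_apply]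
    simp [h]
  · simp [h]

theorem cf_mul_inv_of (x y : Fin n) (g : FreeGroup (Fin n)) :
    cf φ D x (g * (FreeGroup.of y)⁻¹)
      = cf φ D x g + (if y = x ∧ φ (g * (FreeGroup.of y)⁻¹) = 1 then -1 else 0) := by
  rw [cf, cf, hD.2, map_add, MonoidAlgebra.coeff_add, Finsupp.add_apply]
  congr 1
  rw [foxD_inv D hD, hD.1]
  by_cases h : y = x
  · rw [if_pos h, mul_one, mul_neg, ← _root_.map_mul, map_neg, φs_of φ,
      MonoidAlgebra.of_apply, MonoidAlgebra.coeff_neg, Finsupp.neg_apply, MonoidAlgebra.coeff_single, Finsupp.single_apply]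
    simp only [h, true_and, _root_.map_mul, _root_.map_inv]
    split_ifs <;> simp
  · simp [h]

end
section
variable {n : ℕ}

theorem take_append_of_le' {α : Type*} {M N : List α} {t : ℕ} (h : t ≤ M.length) :
    (M ++ N).take t = M.take t := by
  rw [List.take_append, Nat.sub_eq_zero_of_le h]
  simp

theorem toWord_mk_of_reduced {L : List (Fin n × Bool)} (h : FreeGroup.reduce L = L) :
    (FreeGroup.mk L).toWord = L := by rw [FreeGroup.toWord_mk, h]

theorem norm_mk_of_reduced {L : List (Fin n × Bool)} (h : FreeGroup.reduce L = L) :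
    (FreeGroup.mk L).norm = L.length := by
  rw [FreeGroup.norm, toWord_mk_of_reduced h]

theorem mk_ne_one_of_reduced {L : List (Fin n × Bool)} (h : FreeGroup.reduce L = L)
    (hne : L ≠ []) : FreeGroup.mk L ≠ 1 := by
  intro hcon
  apply hne
  rw [← toWord_mk_of_reduced h, hcon, FreeGroup.toWord_one]

variable (φ : FreeGroup (Fin n) →* FreeGroup (Fin n))
  (D : Fin n → FreeGroup (Fin n) → MonoidAlgebra ℤ (FreeGroup (Fin n)))
  (hD : IsFoxDerivative D)
include hD

theorem cf_formula (M : List (Fin n × Bool)) (x : Fin n) (hne : M ≠ [])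
    (hmid : ∀ t, 0 < t → t < M.length → φ (FreeGroup.mk (M.take t)) ≠ 1) :
    cf φ D x (FreeGroup.mk M)
      = (if M.head? = some (x, true) then 1 else 0)
        + (if M.getLast? = some (x, false) ∧ φ (FreeGroup.mk M) = 1 then -1 else 0) := by
  induction M using List.reverseRecOn with
  | nil => exact absurd rfl hne
  | append_singleton M l ih =>
    obtain ⟨y, b⟩ := l
    rcases eq_or_ne M [] with rfl | hM
    · -- single letter
      cases b
      · rw [show FreeGroup.mk ([] ++ [(y, false)]) = 1 * (FreeGroup.of y)⁻¹ by
          rw [one_mul, List.nil_append, mk_single_false]]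
        rw [cf_mul_inv_of φ D hD, cf_one φ D hD]
        rw [one_mul, ← mk_single_false]
        simp [Prod.ext_iff]
      · rw [show FreeGroup.mk ([] ++ [(y, true)]) = 1 * FreeGroup.of y by
          rw [one_mul, List.nil_append]; rfl]
        rw [cf_mul_of φ D hD, cf_one φ D hD]
        by_cases h : y = x <;> simp [h, Prod.ext_iff]
    · -- M nonempty
      have hlen : 0 < M.length := List.length_pos_iff.mpr hM
      have hmid' : ∀ t, 0 < t → t < M.length → φ (FreeGroup.mk (M.take t)) ≠ 1 := by
        intro t ht htl
        have := hmid t ht (by simp; omega)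
        rwa [take_append_of_le' (le_of_lt htl)] at this
      have hMk : φ (FreeGroup.mk M) ≠ 1 := by
        have := hmid M.length hlen (by simp)
        rwa [take_append_of_le' le_rfl, List.take_length] at this
      have hIH := ih hM hmid'
      rw [show (if M.getLast? = some (x, false) ∧ φ (FreeGroup.mk M) = 1 then (-1:ℤ) else 0) = 0
          from if_neg fun h => hMk h.2, add_zero] at hIH
      have hsplit : FreeGroup.mk (M ++ [(y, b)]) = FreeGroup.mk M * FreeGroup.mk [(y, b)] :=
        (FreeGroup.mul_mk).symm
      have hhead : (M ++ [(y, b)]).head? = M.head? := by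
        rw [List.head?_append]
        cases hM' : M.head? with
        | none => exact absurd (List.head?_eq_none_iff.mp hM') hM
        | some z => rfl
      have hlast : (M ++ [(y, b)]).getLast? = some (y, b) := List.getLast?_concat
      cases b
      · rw [hsplit, mk_single_false, cf_mul_inv_of φ D hD, hIH]
        rw [← mk_single_false, ← hsplit, hhead, hlast]
        by_cases h : y = x <;> simp [h, Prod.ext_iff]
      · rw [hsplit, show FreeGroup.mk [(y, true)] = FreeGroup.of y from rfl,
          cf_mul_of φ D hD, hIH]
        rw [hhead, hlast]
        rw [show (if y = x ∧ φ (FreeGroup.mk M) = 1 then (1:ℤ) else 0) = 0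
          from if_neg fun h => hMk h.2, add_zero]
        simp [Prod.ext_iff]

end
theorem getLast?_cons_ne {α : Type*} (a : α) (l : List α) (h : l ≠ []) :
    (a :: l).getLast? = l.getLast? := by
  obtain ⟨M, lst, rfl⟩ := (List.eq_nil_or_concat l).resolve_left h
  rw [List.concat_eq_append, ← List.cons_append, List.getLast?_concat, List.getLast?_concat]

section
variable {n : ℕ} (φ : FreeGroup (Fin n) →* FreeGroup (Fin n))
  (D : Fin n → FreeGroup (Fin n) → MonoidAlgebra ℤ (FreeGroup (Fin n)))

theorem mk_pair_cancel (z : Fin n) (b : Bool) :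
    FreeGroup.mk [(z, b), (z, !b)] = 1 := by
  rw [FreeGroup.one_eq_mk]
  exact Quot.sound (@FreeGroup.Red.Step.not (Fin n) [] [] z b)

theorem mk_pair_cancel' (z : Fin n) (b : Bool) :
    FreeGroup.mk [(z, !b), (z, b)] = 1 := by
  have := mk_pair_cancel z (!b)
  rwa [Bool.not_not] at this

variable (hD : IsFoxDerivative D)
include hD

theorem exists_kernel_witness (hφ : ¬ Function.Injective φ) :
    ∃ v : FreeGroup (Fin n), φ v = 1 ∧ ∃ x : Fin n, cf φ D x v ≠ 0 := by
  classical
  rw [Function.not_injective_iff] at hφ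
  obtain ⟨a, b0, hab, hne0⟩ := hφ
  have hPne : ∃ m, ∃ u : FreeGroup (Fin n), u ≠ 1 ∧ φ u = 1 ∧ u.norm = m :=
    ⟨_, a * b0⁻¹, fun h => hne0 (mul_inv_eq_one.mp h),
      by rw [_root_.map_mul, _root_.map_inv, hab, mul_inv_cancel], rfl⟩
  set k := sInf {m | ∃ u : FreeGroup (Fin n), u ≠ 1 ∧ φ u = 1 ∧ u.norm = m} with hkdef
  obtain ⟨w, hw1, hwφ, hwk⟩ := Nat.sInf_mem hPne
  have hmin : ∀ u : FreeGroup (Fin n), u ≠ 1 → φ u = 1 → k ≤ u.norm :=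
    fun u h1 h2 => Nat.sInf_le ⟨u, h1, h2, rfl⟩
  have hpre : ∀ M : List (Fin n × Bool), FreeGroup.reduce M = M → M.length ≤ k →
      ∀ t, 0 < t → t < M.length → φ (FreeGroup.mk (M.take t)) ≠ 1 := by
    intro M hMred hMlen t ht htl hcon
    have hcht : List.Chain' (fun a c => c ≠ (a.1, !a.2)) (M.take t) :=
      ((reduce_eq_self_iff M).mp hMred).take t
    have hredt : FreeGroup.reduce (M.take t) = M.take t := (reduce_eq_self_iff _).mpr hcht
    have hlt : (M.take t).length = t := by rw [List.length_take]; omega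
    have hne : M.take t ≠ [] := by
      intro h; rw [h] at hlt; simp at hlt; omega
    have h1 : FreeGroup.mk (M.take t) ≠ 1 := mk_ne_one_of_reduced hredt hne
    have := hmin _ h1 hcon
    rw [norm_mk_of_reduced hredt, hlt] at this
    omega
  set L := w.toWord with hLdef
  have hred : FreeGroup.reduce L = L := FreeGroup.reduce_toWord w
  have hch : List.Chain' (fun a c => c ≠ (a.1, !a.2)) L := (reduce_eq_self_iff L).mp hred
  have hmkL : FreeGroup.mk L = w := FreeGroup.mk_toWord
  have hLk : L.length = k := hwk
  have hLne : L ≠ [] := by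
    intro h
    apply hw1
    rw [← hmkL, h, ← FreeGroup.one_eq_mk]
  -- the "conjugate-shaped" case is impossible by minimality
  have hconj : ∀ (z : Fin n) (b : Bool),
      L.head? = some (z, b) → L.getLast? = some (z, !b) → False := by
    intro z b h1 h2
    obtain ⟨hd, T, hLT⟩ := List.exists_cons_of_ne_nil hLne
    have hhd : hd = (z, b) := by
      rw [hLT] at h1; exact Option.some_injective _ h1
    subst hhd
    rcases List.eq_nil_or_concat T with rfl | ⟨M, lst, hTc⟩
    · rw [hLT] at h2
      simp at h2
    · rw [List.concat_eq_append] at hTc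
      subst hTc
      have hlst : lst = (z, !b) := by
        rw [hLT, ← List.cons_append, List.getLast?_concat] at h2
        exact Option.some_injective _ h2
      subst hlst
      -- M is a shorter kernel element
      have hMne : M ≠ [] := by
        rintro rfl
        rw [hLT] at hch
        simp [List.Chain', List.isChain_cons_cons] at hch
      have hMch : List.Chain' (fun a c => c ≠ (a.1, !a.2)) M := by
        exact hch.infix ⟨[(z, b)], [(z, !b)], by rw [hLT]; rfl⟩
      have hMred : FreeGroup.reduce M = M := (reduce_eq_self_iff M).mpr hMch
      have hMne1 : FreeGroup.mk M ≠ 1 := mk_ne_one_of_reduced hMred hMne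
      have hBA : FreeGroup.mk [(z, !b)] * FreeGroup.mk [(z, b)] = 1 := by
        rw [FreeGroup.mul_mk]; exact mk_pair_cancel' z b
      have hw' : w = FreeGroup.mk [(z, b)] * FreeGroup.mk M * FreeGroup.mk [(z, !b)] := by
        rw [FreeGroup.mul_mk, FreeGroup.mul_mk, ← hmkL, hLT]; rfl
      have hM_eq : FreeGroup.mk M
          = (FreeGroup.mk [(z, b)])⁻¹ * w * (FreeGroup.mk [(z, !b)])⁻¹ := by
        rw [hw']; group
      have hφM : φ (FreeGroup.mk M) = 1 := by
        rw [hM_eq]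
        simp only [_root_.map_mul, _root_.map_inv, hwφ, mul_one]
        rw [← mul_inv_rev, ← _root_.map_mul, hBA, _root_.map_one, inv_one]
      have hlen : M.length + 2 = k := by
        rw [← hLk, hLT]; simp
      have := hmin _ hMne1 hφM
      rw [norm_mk_of_reduced hMred] at this
      omega
  obtain ⟨hd, T, hLT⟩ := List.exists_cons_of_ne_nil hLne
  obtain ⟨z, bb⟩ := hd
  have hhead : L.head? = some (z, bb) := by rw [hLT]; rfl
  obtain ⟨⟨y, bl⟩, hlast⟩ : ∃ p, L.getLast? = some p :=
    ⟨L.getLast hLne, List.getLast?_eq_getLast hLne⟩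
  cases bb
  · -- first letter negative
    cases bl
    · -- last letter negative : take x := y
      refine ⟨w, hwφ, y, ?_⟩
      rw [← hmkL, cf_formula φ D hD L y hLne (hpre L hred (le_of_eq hLk))]
      rw [hhead, hlast, hmkL]
      simp [hwφ]
    · -- last letter positive
      by_cases hzy : y = z
      · exact absurd (hconj z false hhead (by rw [hlast, hzy]; rfl)) not_false
      · -- conjugate by z
        have hTne : T ≠ [] := by
          rintro rfl
          rw [hLT] at hlast
          simp at hlast
        set L' := T ++ [(z, false)] with hL'def
        have hTlast : T.getLast? = some (y, true) := by
          rw [← getLast?_cons_ne (z, false) T hTne, ← hLT]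
          exact hlast
        have hch' : List.Chain' (fun a c => c ≠ (a.1, !a.2)) L' := by
          rw [hL'def]; show List.IsChain _ _; rw [List.isChain_append]
          refine ⟨(hLT ▸ hch).tail, List.isChain_singleton _, ?_⟩
          intro p hp q hq
          rw [hTlast] at hp
          simp at hp hq
          rw [← hp, ← hq]
          intro hcon
          apply hzy
          have := congrArg Prod.fst hcon
          simpa using this.symm
        have hred' : FreeGroup.reduce L' = L' := (reduce_eq_self_iff L').mpr hch'
        have hL'len : L'.length = k := by
          rw [hL'def, ← hLk, hLT]
          simp
        have hw' : FreeGroup.mk L' = FreeGroup.of z * w * (FreeGroup.of z)⁻¹ := by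
          have h1 : w = (FreeGroup.of z)⁻¹ * FreeGroup.mk T := by
            rw [← mk_single_false, FreeGroup.mul_mk, ← hmkL, hLT, List.singleton_append]
          have h2 : FreeGroup.mk L' = FreeGroup.mk T * (FreeGroup.of z)⁻¹ := by
            rw [← mk_single_false, FreeGroup.mul_mk]
          rw [h2, h1]
          group
        have hφ' : φ (FreeGroup.mk L') = 1 := by
          rw [hw']
          simp [_root_.map_mul, hwφ]
        refine ⟨FreeGroup.mk L', hφ', z, ?_⟩
        rw [cf_formula φ D hD L' z (by simp [hL'def]) (hpre L' hred' (le_of_eq hL'len))]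
        have hgl : L'.getLast? = some (z, false) := List.getLast?_concat
        have hheadL' : L'.head? = T.head? := by
          rw [hL'def, List.head?_append]
          obtain ⟨t0, T', rfl⟩ := List.exists_cons_of_ne_nil hTne
          rfl
        obtain ⟨t0, T', hT0⟩ := List.exists_cons_of_ne_nil hTne
        have ht0 : t0 ≠ (z, true) := by
          have h6 := hLT ▸ hch
          rw [hT0] at h6
          have h5 := (List.isChain_cons_cons.mp h6).1
          simpa using h5
        rw [hgl, hheadL', hT0]
        simp [hφ', ht0]
  · -- first letter positive: take x := z
    by_cases hl : L.getLast? = some (z, false)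
    · exact absurd (hconj z true hhead (by rw [hl]; rfl)) not_false
    · refine ⟨w, hwφ, z, ?_⟩
      rw [← hmkL, cf_formula φ D hD L z hLne (hpre L hred (le_of_eq hLk))]
      rw [hhead, hmkL]
      simp [hwφ, hl]

end
/-- The Fox Jacobian of a non-injective endomorphism of a finitely generated free group
has a nontrivial left kernel over the integral group ring; consequently it is not
invertible over any division ring containing the group ring. -/
theorem fox_jacobian_not_injective (n : ℕ) (hn : 1 ≤ n)
    (φ : FreeGroup (Fin n) →* FreeGroup (Fin n))
    (hφ : ¬ Function.Injective φ)
    (D : Fin n → FreeGroup (Fin n) → MonoidAlgebra ℤ (FreeGroup (Fin n)))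
    (hD : IsFoxDerivative D) :
    ∃ U : Fin n → MonoidAlgebra ℤ (FreeGroup (Fin n)),
      U ≠ 0 ∧
      (∀ j : Fin n, ∑ i : Fin n, U i * D j (φ (FreeGroup.of i)) = 0) ∧
      (∀ (K : Type*) [DivisionRing K]
        (ι : MonoidAlgebra ℤ (FreeGroup (Fin n)) →+* K),
        Function.Injective ι →
        ¬ IsUnit (Matrix.of fun i j : Fin n => ι (D j (φ (FreeGroup.of i))))) := by
  obtain ⟨v, hvφ, x, hvx⟩ := exists_kernel_witness φ D hD hφ
  set U : Fin n → MonoidAlgebra ℤ (FreeGroup (Fin n)) := fun i => φs φ (D i v) with hUdef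
  have hUx : U x ≠ 0 := by
    intro h
    apply hvx
    rw [cf, show φs φ (D x v) = U x from rfl, h]
    simp
  have hrow : ∀ j : Fin n, ∑ i : Fin n, U i * D j (φ (FreeGroup.of i)) = 0 := by
    intro j
    have hc := fox_chain_rule φ D hD v j
    rw [hvφ, foxD_one D hD] at hc
    exact hc.symm
  refine ⟨U, ?_, hrow, ?_⟩
  · intro h0
    exact hUx (congrFun h0 x)
  · intro K _ ι hι hunit
    set M : Matrix (Fin n) (Fin n) K :=
      Matrix.of fun i j : Fin n => ι (D j (φ (FreeGroup.of i))) with hMdef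
    set vK : Fin n → K := fun i => ι (U i) with hvKdef
    have hvM : Matrix.vecMul vK M = 0 := by
      funext j
      have : Matrix.vecMul vK M j = ∑ i : Fin n, ι (U i) * ι (D j (φ (FreeGroup.of i))) := by
        simp [Matrix.vecMul, dotProduct, hMdef, hvKdef]
      rw [this]
      have : ∑ i : Fin n, ι (U i) * ι (D j (φ (FreeGroup.of i)))
          = ι (∑ i : Fin n, U i * D j (φ (FreeGroup.of i))) := by
        rw [map_sum]
        exact Finset.sum_congr rfl fun i _ => (map_mul ι _ _).symm
      rw [this, hrow j, map_zero]
      rfl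
    set N : Matrix (Fin n) (Fin n) K := Units.val hunit.unit⁻¹ with hNdef
    have hMinv : M * N = 1 := by
      have h := hunit.unit.mul_inv
      rwa [hunit.unit_spec] at h
    have hvK0 : vK = 0 := by
      calc vK = Matrix.vecMul vK 1 := (Matrix.vecMul_one vK).symm
        _ = Matrix.vecMul vK (M * N) := by rw [hMinv]
        _ = Matrix.vecMul (Matrix.vecMul vK M) N :=
          (Matrix.vecMul_vecMul vK M N).symm
        _ = Matrix.vecMul 0 N := by rw [hvM]
        _ = 0 := Matrix.zero_vecMul N
    apply hUx
    apply hι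
    rw [map_zero]
    exact congrFun hvK0 x
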